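/- Let K = ∑_ω √γ(ω) A(ω) where A(ω) = ∑_{λ_i − λ_j = ω} |ψ_i⟩⟨ψ_i| A |ψ_j⟩⟨ψ_j| and A is a random Hermitian matrix with E[A_{ij}A_{kl}] = 0 for (i,j) ≠ (l,k) and E|A_{ij}|² = s² for i ≠ j. Then the averaged Lindbladian E[ℒ_K] ρ = E[KρK† − ½{K†K, ρ}] equals the Davies generator ∑_ω γ(ω) E[A(ω) ρ A(ω)† − ½{A(ω)† A(ω), ρ}]: i.e., all cross-terms between distinct Bohr frequencies ω ≠ ω′ vanish in expectation. -/

import Mathlib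

open Matrix MeasureTheory Finset

attribute [local instance] Matrix.frobeniusNormedAddCommGroup Matrix.frobeniusNormedSpace

variable {N : ℕ}

/-- The single-jump Lindblad dissipator `ℒ_K ρ = KρK† − ½{K†K, ρ}`. -/
noncomputable def dissipator (K ρ : Matrix (Fin N) (Fin N) ℂ) :
    Matrix (Fin N) (Fin N) ℂ :=
  K * ρ * Kᴴ - (1 / 2 : ℂ) • (Kᴴ * K * ρ + ρ * (Kᴴ * K))

/-- The weighted jump `K = ∑_ω √γ(ω) A(ω)`, written entrywise in the eigenbasis of `H`:
`K_{ij} = √γ(λ_i − λ_j) A_{ij}`. -/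
noncomputable def weightedJump (lam : Fin N → ℝ) (γ : ℝ → ℝ)
    (A : Matrix (Fin N) (Fin N) ℂ) : Matrix (Fin N) (Fin N) ℂ :=
  Matrix.of fun i j => (Real.sqrt (γ (lam i - lam j)) : ℂ) * A i j

/-- The restriction `A(ω) = ∑_{λ_i−λ_j=ω} |ψ_i⟩⟨ψ_i| A |ψ_j⟩⟨ψ_j|` of `A` to Bohr
frequency `ω`, in the eigenbasis of `H`. -/
noncomputable def bohrRestrict (lam : Fin N → ℝ) (ω0 : ℝ)
    (A : Matrix (Fin N) (Fin N) ℂ) : Matrix (Fin N) (Fin N) ℂ :=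
  Matrix.of fun i j => if lam i - lam j = ω0 then A i j else 0

/-! ### Auxiliary lemmas -/

noncomputable instance matrixFrobTopology : TopologicalSpace (Matrix (Fin N) (Fin N) ℂ) :=
  (Matrix.frobeniusNormedAddCommGroup (m := Fin N) (n := Fin N) (α := ℂ)).toUniformSpace.toTopologicalSpace

lemma matrix_eq_sum' (F : Matrix (Fin N) (Fin N) ℂ) :
    F = ∑ p : Fin N, ∑ q : Fin N, F p q • Matrix.single p q (1:ℂ) := by
  conv_lhs => rw [Matrix.matrix_eq_sum_single F]
  simp

section integralHelpers
variable {Ω : Type*} [MeasurableSpace Ω] {μ : Measure Ω}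

lemma integrable_matrix {F : Ω → Matrix (Fin N) (Fin N) ℂ}
    (h : ∀ p q, Integrable (fun ω => F ω p q) μ) : Integrable F μ := by
  have hF : F = fun ω => ∑ p : Fin N, ∑ q : Fin N, F ω p q • Matrix.single p q (1:ℂ) :=
    funext fun ω => matrix_eq_sum' (F ω)
  rw [hF]
  exact integrable_finset_sum _ fun p _ =>
    integrable_finset_sum _ fun q _ => (h p q).smul_const _

lemma integral_matrix_apply {F : Ω → Matrix (Fin N) (Fin N) ℂ}
    (h : ∀ p q, Integrable (fun ω => F ω p q) μ) (p q : Fin N) :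
    (∫ ω, F ω ∂μ) p q = ∫ ω, F ω p q ∂μ := by
  have hF : (fun ω => F ω) = fun ω => ∑ i : Fin N, ∑ j : Fin N, F ω i j • Matrix.single i j (1:ℂ) :=
    funext fun ω => matrix_eq_sum' (F ω)
  have h2 : ∫ ω, F ω ∂μ = ∑ i : Fin N, ∑ j : Fin N, (∫ ω, F ω i j ∂μ) • Matrix.single i j (1:ℂ) := by
    rw [hF, integral_finset_sum _ (fun i _ =>
      integrable_finset_sum _ fun j _ => (h i j).smul_const _)]
    refine Finset.sum_congr rfl fun i _ => ?_
    rw [integral_finset_sum _ (fun j _ => (h i j).smul_const _)]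
    exact Finset.sum_congr rfl fun j _ => integral_smul_const _ _
  rw [h2]
  simp [Matrix.sum_apply, Matrix.single, ite_and, Finset.sum_ite_eq']

lemma ite_term_integrable {A : Ω → Matrix (Fin N) (Fin N) ℂ}
    (hint : ∀ i j k l : Fin N, Integrable (fun ω => A ω i j * A ω k l) μ)
    (P : Prop) [Decidable P] (c : ℂ) (i j k l : Fin N) :
    Integrable (fun ω => if P then c * (A ω i j * A ω k l) else 0) μ := by
  by_cases hP : P
  · simpa [hP] using (hint i j k l).const_mul c
  · simp only [hP, if_false]
    exact integrable_zero _ _ _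

lemma ite_term_integral_zero {A : Ω → Matrix (Fin N) (Fin N) ℂ}
    (hzero : ∀ i j k l : Fin N, (i, j) ≠ (l, k) → ∫ ω, A ω i j * A ω k l ∂μ = 0)
    (P : Prop) [Decidable P] (c : ℂ) (i j k l : Fin N) (h : P → (i, j) ≠ (l, k)) :
    ∫ ω, (if P then c * (A ω i j * A ω k l) else 0) ∂μ = 0 := by
  by_cases hP : P
  · simp only [if_pos hP]
    rw [MeasureTheory.integral_const_mul, hzero i j k l (h hP), mul_zero]
  · simp [hP]

end integralHelpers

lemma dissipator_sum {ι : Type*} (s : Finset ι) (c : ι → ℝ)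
    (B : ι → Matrix (Fin N) (Fin N) ℂ) (ρ : Matrix (Fin N) (Fin N) ℂ) :
    dissipator (∑ i ∈ s, (c i : ℂ) • B i) ρ
      = ∑ i ∈ s, ∑ j ∈ s, ((c i : ℂ) * c j) •
          (B i * ρ * (B j)ᴴ - (1 / 2 : ℂ) • ((B j)ᴴ * B i * ρ + ρ * ((B j)ᴴ * B i))) := by
  unfold dissipator
  have h1 : (∑ i ∈ s, (c i : ℂ) • B i) * ρ * (∑ j ∈ s, (c j : ℂ) • B j)ᴴ
      = ∑ i ∈ s, ∑ j ∈ s, ((c i : ℂ) * c j) • (B i * ρ * (B j)ᴴ) := by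
    simp only [Matrix.conjTranspose_sum, Matrix.conjTranspose_smul, Finset.sum_mul,
      Finset.mul_sum, Matrix.smul_mul, Matrix.mul_smul, smul_smul, Complex.star_def,
      Complex.conj_ofReal]
    rw [Finset.sum_comm]
    exact Finset.sum_congr rfl fun i _ => Finset.sum_congr rfl fun j _ => by rw [mul_comm]
  have h2 : (∑ j ∈ s, (c j : ℂ) • B j)ᴴ * (∑ i ∈ s, (c i : ℂ) • B i) * ρ
      = ∑ i ∈ s, ∑ j ∈ s, ((c i : ℂ) * c j) • ((B j)ᴴ * B i * ρ) := by
    simp only [Matrix.conjTranspose_sum, Matrix.conjTranspose_smul, Finset.sum_mul,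
      Finset.mul_sum, Matrix.smul_mul, Matrix.mul_smul, smul_smul, Complex.star_def,
      Complex.conj_ofReal]
  have h3 : ρ * ((∑ j ∈ s, (c j : ℂ) • B j)ᴴ * (∑ i ∈ s, (c i : ℂ) • B i))
      = ∑ i ∈ s, ∑ j ∈ s, ((c i : ℂ) * c j) • (ρ * ((B j)ᴴ * B i)) := by
    simp only [Matrix.conjTranspose_sum, Matrix.conjTranspose_smul, Finset.sum_mul,
      Finset.mul_sum, Matrix.smul_mul, Matrix.mul_smul, smul_smul, Complex.star_def,
      Complex.conj_ofReal]
  rw [h1, h2, h3]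
  simp only [← Finset.sum_add_distrib, Finset.smul_sum, ← Finset.sum_sub_distrib]
  refine Finset.sum_congr rfl fun i _ => Finset.sum_congr rfl fun j _ => ?_
  module

lemma weightedJump_eq_sum (lam : Fin N → ℝ) (γ : ℝ → ℝ) (M : Matrix (Fin N) (Fin N) ℂ) :
    weightedJump lam γ M
      = ∑ ω0 ∈ Finset.image (fun p : Fin N × Fin N => lam p.1 - lam p.2) Finset.univ,
          ((Real.sqrt (γ ω0) : ℝ) : ℂ) • bohrRestrict lam ω0 M := by
  ext i j
  have hmem : lam i - lam j ∈ Finset.image (fun p : Fin N × Fin N => lam p.1 - lam p.2)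
      Finset.univ := Finset.mem_image_of_mem _ (Finset.mem_univ (i, j))
  simp [weightedJump, bohrRestrict, Matrix.sum_apply, mul_ite, mul_zero,
    Finset.sum_ite_eq, hmem]

/-- Entrywise formula for `A(ω₀) ρ A(ω₁)†` for Hermitian `M`. -/
lemma bohr_X_apply (lam : Fin N → ℝ) (ω0 ω1 : ℝ) {M : Matrix (Fin N) (Fin N) ℂ}
    (hM : M.IsHermitian) (ρ : Matrix (Fin N) (Fin N) ℂ) (p q : Fin N) :
    (bohrRestrict lam ω0 M * ρ * (bohrRestrict lam ω1 M)ᴴ) p q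
      = ∑ b : Fin N, ∑ a : Fin N,
          (if lam p - lam a = ω0 ∧ lam q - lam b = ω1 then ρ a b * (M p a * M b q) else 0) := by
  rw [Matrix.mul_apply]
  refine Finset.sum_congr rfl fun b _ => ?_
  rw [Matrix.mul_apply, Finset.sum_mul]
  refine Finset.sum_congr rfl fun a _ => ?_
  simp only [bohrRestrict, Matrix.conjTranspose_apply, Matrix.of_apply]
  have hc : star (M q b) = M b q := hM.apply b q
  split_ifs with h1 h2 h2 <;> simp_all <;> ring

/-- Entrywise formula for `A(ω₁)† A(ω₀) ρ` for Hermitian `M`. -/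
lemma bohr_Y_apply (lam : Fin N → ℝ) (ω0 ω1 : ℝ) {M : Matrix (Fin N) (Fin N) ℂ}
    (hM : M.IsHermitian) (ρ : Matrix (Fin N) (Fin N) ℂ) (p q : Fin N) :
    ((bohrRestrict lam ω1 M)ᴴ * bohrRestrict lam ω0 M * ρ) p q
      = ∑ b : Fin N, ∑ a : Fin N,
          (if lam a - lam p = ω1 ∧ lam a - lam b = ω0 then ρ b q * (M p a * M a b) else 0) := by
  rw [Matrix.mul_apply]
  refine Finset.sum_congr rfl fun b _ => ?_
  rw [Matrix.mul_apply, Finset.sum_mul]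
  refine Finset.sum_congr rfl fun a _ => ?_
  simp only [bohrRestrict, Matrix.conjTranspose_apply, Matrix.of_apply]
  have hc : star (M a p) = M p a := hM.apply p a
  split_ifs with h1 h2 h2 <;> simp_all <;> ring

/-- Entrywise formula for `ρ A(ω₁)† A(ω₀)` for Hermitian `M`. -/
lemma bohr_Z_apply (lam : Fin N → ℝ) (ω0 ω1 : ℝ) {M : Matrix (Fin N) (Fin N) ℂ}
    (hM : M.IsHermitian) (ρ : Matrix (Fin N) (Fin N) ℂ) (p q : Fin N) :
    (ρ * ((bohrRestrict lam ω1 M)ᴴ * bohrRestrict lam ω0 M)) p q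
      = ∑ a : Fin N, ∑ b : Fin N,
          (if lam b - lam a = ω1 ∧ lam b - lam q = ω0 then ρ p a * (M a b * M b q) else 0) := by
  rw [Matrix.mul_apply]
  refine Finset.sum_congr rfl fun a _ => ?_
  rw [Matrix.mul_apply, Finset.mul_sum]
  refine Finset.sum_congr rfl fun b _ => ?_
  simp only [bohrRestrict, Matrix.conjTranspose_apply, Matrix.of_apply]
  have hc : star (M b a) = M a b := hM.apply a b
  split_ifs with h1 h2 h2 <;> simp_all <;> ring

/-- For a random Hermitian `A` with `E[A_{ij}A_{kl}] = 0` for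
`(i,j) ≠ (l,k)` and `E|A_{ij}|² = v²` for `i ≠ j`, and `K = ∑_ω √γ(ω) A(ω)`, the averaged
Lindbladian `E[ℒ_K]` equals the Davies generator
`∑_ω γ(ω) E[A(ω) ρ A(ω)† − ½{A(ω)†A(ω), ρ}]`: cross-terms between distinct Bohr
frequencies vanish in expectation. -/
theorem averaged_random_jump_is_davies_generator
    {Ω : Type*} [MeasurableSpace Ω] (μ : Measure Ω) [IsProbabilityMeasure μ]
    (A : Ω → Matrix (Fin N) (Fin N) ℂ)
    (hherm : ∀ ω, (A ω).IsHermitian)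
    (hint : ∀ i j k l : Fin N, Integrable (fun ω => A ω i j * A ω k l) μ)
    (hzero : ∀ i j k l : Fin N, (i, j) ≠ (l, k) → ∫ ω, A ω i j * A ω k l ∂μ = 0)
    (v : ℝ) (hvar : ∀ i j : Fin N, i ≠ j → ∫ ω, ((‖A ω i j‖ : ℝ) : ℂ) ^ 2 ∂μ = (v : ℂ) ^ 2)
    (lam : Fin N → ℝ) (γ : ℝ → ℝ) (hγ : ∀ x, 0 ≤ γ x)
    (ρ : Matrix (Fin N) (Fin N) ℂ) :
    ∫ ω, dissipator (weightedJump lam γ (A ω)) ρ ∂μ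
      = ∑ ω0 ∈ Finset.image (fun p : Fin N × Fin N => lam p.1 - lam p.2) Finset.univ,
          (γ ω0 : ℂ) • ∫ ω, dissipator (bohrRestrict lam ω0 (A ω)) ρ ∂μ := by
  classical
  set S : Finset ℝ := Finset.image (fun p : Fin N × Fin N => lam p.1 - lam p.2) Finset.univ
    with hSdef
  -- the three pieces of the cross dissipator, as matrix integrands
  set X : ℝ → ℝ → Ω → Matrix (Fin N) (Fin N) ℂ := fun ω0 ω1 w =>
    bohrRestrict lam ω0 (A w) * ρ * (bohrRestrict lam ω1 (A w))ᴴ with hXdef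
  set Y : ℝ → ℝ → Ω → Matrix (Fin N) (Fin N) ℂ := fun ω0 ω1 w =>
    (bohrRestrict lam ω1 (A w))ᴴ * bohrRestrict lam ω0 (A w) * ρ with hYdef
  set Z : ℝ → ℝ → Ω → Matrix (Fin N) (Fin N) ℂ := fun ω0 ω1 w =>
    ρ * ((bohrRestrict lam ω1 (A w))ᴴ * bohrRestrict lam ω0 (A w)) with hZdef
  -- integrability of the entries of each piece
  have hXint : ∀ ω0 ω1, Integrable (X ω0 ω1) μ := by
    intro ω0 ω1
    refine integrable_matrix fun p q => ?_
    have h : (fun w => X ω0 ω1 w p q) = fun w => ∑ b : Fin N, ∑ a : Fin N,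
        (if lam p - lam a = ω0 ∧ lam q - lam b = ω1 then ρ a b * (A w p a * A w b q) else 0) :=
      funext fun w => bohr_X_apply lam ω0 ω1 (hherm w) ρ p q
    rw [h]
    exact integrable_finset_sum _ fun b _ => integrable_finset_sum _ fun a _ =>
      ite_term_integrable hint _ _ _ _ _ _
  have hYint : ∀ ω0 ω1, Integrable (Y ω0 ω1) μ := by
    intro ω0 ω1
    refine integrable_matrix fun p q => ?_
    have h : (fun w => Y ω0 ω1 w p q) = fun w => ∑ b : Fin N, ∑ a : Fin N,
        (if lam a - lam p = ω1 ∧ lam a - lam b = ω0 then ρ b q * (A w p a * A w a b) else 0) :=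
      funext fun w => bohr_Y_apply lam ω0 ω1 (hherm w) ρ p q
    rw [h]
    exact integrable_finset_sum _ fun b _ => integrable_finset_sum _ fun a _ =>
      ite_term_integrable hint _ _ _ _ _ _
  have hZint : ∀ ω0 ω1, Integrable (Z ω0 ω1) μ := by
    intro ω0 ω1
    refine integrable_matrix fun p q => ?_
    have h : (fun w => Z ω0 ω1 w p q) = fun w => ∑ a : Fin N, ∑ b : Fin N,
        (if lam b - lam a = ω1 ∧ lam b - lam q = ω0 then ρ p a * (A w a b * A w b q) else 0) :=
      funext fun w => bohr_Z_apply lam ω0 ω1 (hherm w) ρ p q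
    rw [h]
    exact integrable_finset_sum _ fun a _ => integrable_finset_sum _ fun b _ =>
      ite_term_integrable hint _ _ _ _ _ _
  -- the cross-term expectations vanish for distinct Bohr frequencies
  have hX0 : ∀ ω0 ω1, ω0 ≠ ω1 → ∫ w, X ω0 ω1 w ∂μ = 0 := by
    intro ω0 ω1 hne
    ext p q
    have hI : ∀ p q : Fin N, Integrable (fun w => X ω0 ω1 w p q) μ := by
      intro p q
      have h : (fun w => X ω0 ω1 w p q) = fun w => ∑ b : Fin N, ∑ a : Fin N,
          (if lam p - lam a = ω0 ∧ lam q - lam b = ω1 then ρ a b * (A w p a * A w b q) else 0) :=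
        funext fun w => bohr_X_apply lam ω0 ω1 (hherm w) ρ p q
      rw [h]
      exact integrable_finset_sum _ fun b _ => integrable_finset_sum _ fun a _ =>
        ite_term_integrable hint _ _ _ _ _ _
    rw [integral_matrix_apply hI p q]
    have h : (fun w => X ω0 ω1 w p q) = fun w => ∑ b : Fin N, ∑ a : Fin N,
        (if lam p - lam a = ω0 ∧ lam q - lam b = ω1 then ρ a b * (A w p a * A w b q) else 0) :=
      funext fun w => bohr_X_apply lam ω0 ω1 (hherm w) ρ p q
    rw [h, integral_finset_sum _ (fun b _ => integrable_finset_sum _ fun a _ =>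
      ite_term_integrable hint _ _ _ _ _ _)]
    simp only [Matrix.zero_apply]
    refine Finset.sum_eq_zero fun b _ => ?_
    rw [integral_finset_sum _ (fun a _ => ite_term_integrable hint _ _ _ _ _ _)]
    refine Finset.sum_eq_zero fun a _ => ?_
    refine ite_term_integral_zero hzero _ _ _ _ _ _ ?_
    rintro ⟨h1, h2⟩ heq
    rw [Prod.mk.injEq] at heq
    exact hne (by rw [← h1, ← h2, heq.1, heq.2])
  have hY0 : ∀ ω0 ω1, ω0 ≠ ω1 → ∫ w, Y ω0 ω1 w ∂μ = 0 := by
    intro ω0 ω1 hne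
    ext p q
    have hI : ∀ p q : Fin N, Integrable (fun w => Y ω0 ω1 w p q) μ := by
      intro p q
      have h : (fun w => Y ω0 ω1 w p q) = fun w => ∑ b : Fin N, ∑ a : Fin N,
          (if lam a - lam p = ω1 ∧ lam a - lam b = ω0 then ρ b q * (A w p a * A w a b) else 0) :=
        funext fun w => bohr_Y_apply lam ω0 ω1 (hherm w) ρ p q
      rw [h]
      exact integrable_finset_sum _ fun b _ => integrable_finset_sum _ fun a _ =>
        ite_term_integrable hint _ _ _ _ _ _
    rw [integral_matrix_apply hI p q]
    have h : (fun w => Y ω0 ω1 w p q) = fun w => ∑ b : Fin N, ∑ a : Fin N,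
        (if lam a - lam p = ω1 ∧ lam a - lam b = ω0 then ρ b q * (A w p a * A w a b) else 0) :=
      funext fun w => bohr_Y_apply lam ω0 ω1 (hherm w) ρ p q
    rw [h, integral_finset_sum _ (fun b _ => integrable_finset_sum _ fun a _ =>
      ite_term_integrable hint _ _ _ _ _ _)]
    simp only [Matrix.zero_apply]
    refine Finset.sum_eq_zero fun b _ => ?_
    rw [integral_finset_sum _ (fun a _ => ite_term_integrable hint _ _ _ _ _ _)]
    refine Finset.sum_eq_zero fun a _ => ?_
    refine ite_term_integral_zero hzero _ _ _ _ _ _ ?_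
    rintro ⟨h1, h2⟩ heq
    rw [Prod.mk.injEq] at heq
    exact hne (by rw [← h1, ← h2, heq.1])
  have hZ0 : ∀ ω0 ω1, ω0 ≠ ω1 → ∫ w, Z ω0 ω1 w ∂μ = 0 := by
    intro ω0 ω1 hne
    ext p q
    have hI : ∀ p q : Fin N, Integrable (fun w => Z ω0 ω1 w p q) μ := by
      intro p q
      have h : (fun w => Z ω0 ω1 w p q) = fun w => ∑ a : Fin N, ∑ b : Fin N,
          (if lam b - lam a = ω1 ∧ lam b - lam q = ω0 then ρ p a * (A w a b * A w b q) else 0) :=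
        funext fun w => bohr_Z_apply lam ω0 ω1 (hherm w) ρ p q
      rw [h]
      exact integrable_finset_sum _ fun a _ => integrable_finset_sum _ fun b _ =>
        ite_term_integrable hint _ _ _ _ _ _
    rw [integral_matrix_apply hI p q]
    have h : (fun w => Z ω0 ω1 w p q) = fun w => ∑ a : Fin N, ∑ b : Fin N,
        (if lam b - lam a = ω1 ∧ lam b - lam q = ω0 then ρ p a * (A w a b * A w b q) else 0) :=
      funext fun w => bohr_Z_apply lam ω0 ω1 (hherm w) ρ p q
    rw [h, integral_finset_sum _ (fun a _ => integrable_finset_sum _ fun b _ =>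
      ite_term_integrable hint _ _ _ _ _ _)]
    simp only [Matrix.zero_apply]
    refine Finset.sum_eq_zero fun a _ => ?_
    rw [integral_finset_sum _ (fun b _ => ite_term_integrable hint _ _ _ _ _ _)]
    refine Finset.sum_eq_zero fun b _ => ?_
    refine ite_term_integral_zero hzero _ _ _ _ _ _ ?_
    rintro ⟨h1, h2⟩ heq
    rw [Prod.mk.injEq] at heq
    exact hne (by rw [← h1, ← h2, heq.1])
  -- combined cross term
  have hYZint : ∀ ω0 ω1, Integrable (fun w =>
      (1 / 2 : ℂ) • (Y ω0 ω1 w + Z ω0 ω1 w)) μ := fun ω0 ω1 => by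
    exact (((hYint ω0 ω1).add (hZint ω0 ω1)).smul ((1/2 : ℂ)))
  have hDint : ∀ ω0 ω1, Integrable (fun w =>
      X ω0 ω1 w - (1 / 2 : ℂ) • (Y ω0 ω1 w + Z ω0 ω1 w)) μ := fun ω0 ω1 =>
    (hXint ω0 ω1).sub (hYZint ω0 ω1)
  have hsmulint : ∀ (c : ℂ) ω0 ω1, Integrable (fun w =>
      c • (X ω0 ω1 w - (1 / 2 : ℂ) • (Y ω0 ω1 w + Z ω0 ω1 w))) μ := fun c ω0 ω1 => by
    exact (hDint ω0 ω1).smul c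
  have hD0 : ∀ ω0 ω1, ω0 ≠ ω1 →
      ∫ w, (X ω0 ω1 w - (1 / 2 : ℂ) • (Y ω0 ω1 w + Z ω0 ω1 w)) ∂μ = 0 := by
    intro ω0 ω1 hne
    rw [integral_sub (hXint ω0 ω1) (hYZint ω0 ω1),
      integral_smul, integral_add (hYint ω0 ω1) (hZint ω0 ω1),
      hX0 ω0 ω1 hne, hY0 ω0 ω1 hne, hZ0 ω0 ω1 hne]
    simp
  -- expand the weighted jump dissipator
  have hfun : (fun w => dissipator (weightedJump lam γ (A w)) ρ)
      = fun w => ∑ ω0 ∈ S, ∑ ω1 ∈ S,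
          ((Real.sqrt (γ ω0) : ℂ) * (Real.sqrt (γ ω1) : ℂ)) •
            (X ω0 ω1 w - (1 / 2 : ℂ) • (Y ω0 ω1 w + Z ω0 ω1 w)) := by
    funext w
    rw [weightedJump_eq_sum lam γ (A w), ← hSdef,
      dissipator_sum S (fun x => Real.sqrt (γ x)) (fun ω0 => bohrRestrict lam ω0 (A w)) ρ]
  rw [hfun, integral_finset_sum _ (fun ω0 _ => integrable_finset_sum _ fun ω1 _ =>
    hsmulint _ ω0 ω1)]
  refine Finset.sum_congr rfl fun ω0 hω0 => ?_
  rw [integral_finset_sum _ (fun ω1 _ => hsmulint _ ω0 ω1)]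
  have hsingle : ∑ ω1 ∈ S, ∫ w, ((Real.sqrt (γ ω0) : ℂ) * (Real.sqrt (γ ω1) : ℂ)) •
        (X ω0 ω1 w - (1 / 2 : ℂ) • (Y ω0 ω1 w + Z ω0 ω1 w)) ∂μ
      = ∫ w, ((Real.sqrt (γ ω0) : ℂ) * (Real.sqrt (γ ω0) : ℂ)) •
        (X ω0 ω0 w - (1 / 2 : ℂ) • (Y ω0 ω0 w + Z ω0 ω0 w)) ∂μ := by
    refine Finset.sum_eq_single_of_mem ω0 hω0 fun ω1 _ hne => ?_
    rw [integral_smul, hD0 ω0 ω1 (fun he => hne he.symm), smul_zero]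
  rw [hsingle, integral_smul]
  have hcoef : ((Real.sqrt (γ ω0) : ℂ) * (Real.sqrt (γ ω0) : ℂ)) = (γ ω0 : ℂ) := by
    rw [← Complex.ofReal_mul, Real.mul_self_sqrt (hγ ω0)]
  rw [hcoef]
  rfl
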